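/- Let v_1,…,v_9 ∈ ℝ^3 and u_1,…,u_9 ∈ ℝ be nonzero real numbers such that Σ_{j=1}^9 u_j f(v_j) = 0 for every homogeneous cubic f. Let a_1,…,a_9 be nonzero reals with Σ_{j=1}^9 u_j^2/a_j = 0, where a_1,…,a_8 > 0 and a_9 < 0. Then for every homogeneous cubic f, Σ_{j=1}^9 a_j f(v_j)^2 ≥ 0. -/

import Mathlib

open MvPolynomial

theorem extreme_ray_nonneg_on_squares
    (v : Fin 9 → (Fin 3 → ℝ)) (u : Fin 9 → ℝ) (hu : ∀ j, u j ≠ 0)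
    (hCB : ∀ f : MvPolynomial (Fin 3) ℝ, f.IsHomogeneous 3 →
      ∑ j, u j * eval (v j) f = 0)
    (a : Fin 9 → ℝ) (ha0 : ∀ j, a j ≠ 0)
    (hapos : ∀ j : Fin 9, (j : ℕ) < 8 → 0 < a j) (haneg : a 8 < 0)
    (hsum : ∑ j, (u j)^2 / a j = 0)
    (f : MvPolynomial (Fin 3) ℝ) (hf : f.IsHomogeneous 3) :
    0 ≤ ∑ j, a j * (eval (v j) f)^2 := by
  set c : Fin 9 → ℝ := fun j => eval (v j) f with hc
  have h1 : ∑ j, u j * c j = 0 := hCB f hf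
  have h8 : (8 : Fin 9) = Fin.last 8 := rfl
  rw [Fin.sum_univ_castSucc] at h1 hsum ⊢
  rw [h8] at haneg
  have hpos : ∀ j : Fin 8, 0 < a j.castSucc := fun j =>
    hapos j.castSucc (by simpa using j.isLt)
  have hu8 : (0:ℝ) < u (Fin.last 8) ^ 2 :=
    lt_of_le_of_ne (sq_nonneg _) (Ne.symm (pow_ne_zero 2 (by rw [← h8]; exact hu 8)))
  set S : ℝ := ∑ j : Fin 8, u j.castSucc ^ 2 / a j.castSucc with hSdef
  set T : ℝ := ∑ j : Fin 8, a j.castSucc * c j.castSucc ^ 2 with hTdef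
  have hS : S * a (Fin.last 8) = -(u (Fin.last 8))^2 := by
    have h := hsum
    have hane : a (Fin.last 8) ≠ 0 := ne_of_lt haneg
    field_simp at h
    linarith
  have hSpos : 0 < S := by nlinarith [hS, hu8, haneg]
  have CS := Finset.sum_mul_sq_le_sq_mul_sq Finset.univ
    (fun j : Fin 8 => u j.castSucc / Real.sqrt (a j.castSucc))
    (fun j : Fin 8 => Real.sqrt (a j.castSucc) * c j.castSucc)
  have e1 : ∑ j : Fin 8, (u j.castSucc / Real.sqrt (a j.castSucc)) *
      (Real.sqrt (a j.castSucc) * c j.castSucc) = ∑ j : Fin 8, u j.castSucc * c j.castSucc :=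
    Finset.sum_congr rfl (fun j _ => by
      have hs : Real.sqrt (a j.castSucc) ≠ 0 := ne_of_gt (Real.sqrt_pos.mpr (hpos j))
      field_simp)
  have e2 : ∑ j : Fin 8, (u j.castSucc / Real.sqrt (a j.castSucc)) ^ 2 = S :=
    Finset.sum_congr rfl (fun j _ => by
      rw [div_pow, Real.sq_sqrt (hpos j).le])
  have e3 : ∑ j : Fin 8, (Real.sqrt (a j.castSucc) * c j.castSucc) ^ 2 = T :=
    Finset.sum_congr rfl (fun j _ => by
      rw [mul_pow, Real.sq_sqrt (hpos j).le])
  rw [e1, e2, e3] at CS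
  have hsum8 : ∑ j : Fin 8, u j.castSucc * c j.castSucc = -(u (Fin.last 8) * c (Fin.last 8)) := by
    linarith
  rw [hsum8] at CS
  have key : (u (Fin.last 8))^2 * (c (Fin.last 8))^2 ≤ S * T := by nlinarith [CS]
  have final : 0 ≤ S * (T + a (Fin.last 8) * c (Fin.last 8) ^ 2) := by nlinarith [key, hS]
  nlinarith [final, hSpos]
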